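/- The linear map Λ_p(X) = Tr(X)·I − pX on M_d(C) is k-positive if 1/(k+1) ≤ p ≤ 1/k (for k < d), and is not (k+1)-positive when p > 1/(k+1). -/

import Mathlib

open scoped BigOperators ComplexConjugate ComplexOrder

noncomputable section

/-- The extension `(I_m ⊗ Λ)` of a map `Λ : M_d → M_d`. -/
def matExt {d : ℕ} (m : ℕ) (Λ : Matrix (Fin d) (Fin d) ℂ → Matrix (Fin d) (Fin d) ℂ)
    (ρ : Matrix (Fin m × Fin d) (Fin m × Fin d) ℂ) :
    Matrix (Fin m × Fin d) (Fin m × Fin d) ℂ :=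
  fun p q => (Λ (Matrix.of fun i j => ρ (p.1, i) (q.1, j))) p.2 q.2

/-- `Λ` is `m`-positive. -/
def kPositive (d m : ℕ) (Λ : Matrix (Fin d) (Fin d) ℂ → Matrix (Fin d) (Fin d) ℂ) : Prop :=
  ∀ ρ : Matrix (Fin m × Fin d) (Fin m × Fin d) ℂ, ρ.PosSemidef → (matExt m Λ ρ).PosSemidef

/-- The map `Λ_p(X) = Tr(X)·I − p·X`. -/
def lamP (d : ℕ) (p : ℝ) (X : Matrix (Fin d) (Fin d) ℂ) : Matrix (Fin d) (Fin d) ℂ :=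
  X.trace • (1 : Matrix (Fin d) (Fin d) ℂ) - (p : ℂ) • X

open Complex Matrix Finset




open Complex Matrix Finset

lemma cs_sum {ι : Type*} [Fintype ι] (x y : ι → ℂ) :
    ‖∑ i, conj (x i) * y i‖ ^ 2 ≤ (∑ i, ‖x i‖ ^ 2) * (∑ i, ‖y i‖ ^ 2) := by
  let x' : EuclideanSpace ℂ ι := WithLp.toLp 2 x
  let y' : EuclideanSpace ℂ ι := WithLp.toLp 2 y
  have h := norm_inner_le_norm (𝕜 := ℂ) x' y'
  have hi : (inner ℂ x' y' : ℂ) = ∑ i, conj (x i) * y i := by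
    simp [x', y', PiLp.inner_apply, RCLike.inner_apply, mul_comm]
  have hx : ‖x'‖ = Real.sqrt (∑ i, ‖x i‖ ^ 2) := by
    simp [x', EuclideanSpace.norm_eq]
  have hy : ‖y'‖ = Real.sqrt (∑ i, ‖y i‖ ^ 2) := by
    simp [y', EuclideanSpace.norm_eq]
  rw [hi, hx, hy] at h
  have h2 := mul_self_le_mul_self (norm_nonneg _) h
  calc ‖∑ i, conj (x i) * y i‖ ^ 2
      = ‖∑ i, conj (x i) * y i‖ * ‖∑ i, conj (x i) * y i‖ := sq _
    _ ≤ (Real.sqrt (∑ i, ‖x i‖ ^ 2) * Real.sqrt (∑ i, ‖y i‖ ^ 2)) *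
        (Real.sqrt (∑ i, ‖x i‖ ^ 2) * Real.sqrt (∑ i, ‖y i‖ ^ 2)) := h2
    _ = (∑ i, ‖x i‖ ^ 2) * (∑ i, ‖y i‖ ^ 2) := by
        rw [mul_mul_mul_comm, Real.mul_self_sqrt (by positivity),
          Real.mul_self_sqrt (by positivity)]

lemma conj_mul_self' (z : ℂ) : conj z * z = ((‖z‖ ^ 2 : ℝ) : ℂ) := by
  rw [← Complex.normSq_eq_conj_mul_self, Complex.normSq_eq_norm_sq]

lemma frob {k d : ℕ} (X : Matrix (Fin k) (Fin d) ℂ) :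
    (Xᴴ * X).trace = ((∑ a, ∑ i, ‖X a i‖ ^ 2 : ℝ) : ℂ) := by
  have h1 : (Xᴴ * X).trace = ∑ i, ∑ a, conj (X a i) * X a i := by
    simp [Matrix.trace, Matrix.diag, Matrix.mul_apply, Matrix.conjTranspose_apply]
  rw [h1]
  simp only [conj_mul_self']
  rw [Finset.sum_comm]
  norm_cast
open Complex Matrix Finset


-- trace as a sum usable for CS
lemma trace_conj_sum {k d : ℕ} (X Y : Matrix (Fin k) (Fin d) ℂ) :
    (Xᴴ * Y).trace = ∑ c : Fin k × Fin d, conj (X c.1 c.2) * Y c.1 c.2 := by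
  have h1 : (Xᴴ * Y).trace = ∑ i, ∑ a, conj (X a i) * Y a i := by
    simp [Matrix.trace, Matrix.diag, Matrix.mul_apply, Matrix.conjTranspose_apply]
  rw [h1, Fintype.sum_prod_type, Finset.sum_comm]

lemma core_eps {k d : ℕ} (A B : Matrix (Fin k) (Fin d) ℂ) {ε : ℝ} (hε : 0 < ε) :
    ‖(Aᴴ * B).trace‖ ^ 2 ≤
      (k : ℝ) * ((∑ i, ∑ l, ‖(Aᴴ * B) i l‖ ^ 2) + ε * (∑ a, ∑ i, ‖B a i‖ ^ 2)) := by
  classical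
  set G : Matrix (Fin k) (Fin k) ℂ := A * Aᴴ + (ε : ℂ) • 1 with hGdef
  have hsm : ((ε : ℂ) • (1 : Matrix (Fin k) (Fin k) ℂ)).PosDef := by
    rw [Matrix.smul_one_eq_diagonal]
    refine Matrix.posDef_diagonal_iff.mpr fun i => ?_
    exact_mod_cast hε
  have hG : G.PosDef := Matrix.PosDef.posSemidef_add (Matrix.posSemidef_self_mul_conjTranspose A) hsm
  have hGS := hG.posSemidef
  open scoped MatrixOrder in
  obtain ⟨S, hSsa, -, hSS⟩ := CFC.exists_sqrt_of_isSelfAdjoint_of_quasispectrumRestricts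
    hGS.isHermitian (QuasispectrumRestricts.nnreal_of_nonneg hGS.nonneg)
  have hSh : S.IsHermitian := hSsa
  have hdetG : G.det ≠ 0 := ne_of_gt hG.det_pos
  have hdetS : S.det ≠ 0 := by
    intro h
    rw [← hSS, Matrix.det_mul, h, mul_zero] at hdetG
    exact hdetG rfl
  have hSu : IsUnit S.det := isUnit_iff_ne_zero.mpr hdetS
  have hSinv : S⁻¹ * S = 1 := Matrix.nonsing_inv_mul S hSu
  have hSinv' : S * S⁻¹ = 1 := Matrix.mul_nonsing_inv S hSu
  have hSih : (S⁻¹)ᴴ = S⁻¹ := by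
    rw [Matrix.conjTranspose_nonsing_inv, hSh.eq]
  set X := S⁻¹ * A with hX
  set Y := S * B with hY
  have hXY : Xᴴ * Y = Aᴴ * B := by
    rw [hX, hY, Matrix.conjTranspose_mul, hSih, Matrix.mul_assoc,
      ← Matrix.mul_assoc (S⁻¹) S B, hSinv, Matrix.one_mul]
  have hGu : IsUnit G.det := isUnit_iff_ne_zero.mpr hdetG
  have hGinv : S⁻¹ * S⁻¹ = G⁻¹ := by
    rw [← hSS, Matrix.mul_inv_rev]
  have hAAh : A * Aᴴ = G - (ε : ℂ) • 1 := by
    rw [hGdef, add_sub_cancel_right]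
  have hXX : (Xᴴ * X).trace = (k : ℂ) - (ε : ℂ) * G⁻¹.trace := by
    have e1 : Xᴴ * X = Aᴴ * S⁻¹ * (S⁻¹ * A) := by
      rw [hX, Matrix.conjTranspose_mul, hSih]
    have e2 : (Aᴴ * S⁻¹ * (S⁻¹ * A)).trace = ((S⁻¹ * S⁻¹) * (A * Aᴴ)).trace := by
      rw [Matrix.trace_mul_comm, ← Matrix.mul_assoc, Matrix.trace_mul_comm,
        ← Matrix.mul_assoc, ← Matrix.mul_assoc, Matrix.mul_assoc (S⁻¹ * S⁻¹) A Aᴴ]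
    rw [e1, e2, hGinv, hAAh, Matrix.mul_sub, Matrix.nonsing_inv_mul G hGu,
      Matrix.mul_smul, Matrix.mul_one, Matrix.trace_sub, Matrix.trace_one,
      Matrix.trace_smul, smul_eq_mul]
    simp
  -- diagonal entries of G⁻¹ have nonnegative real part
  have hGinvPD : (G⁻¹).PosDef := hG.inv
  have hReGinv : 0 ≤ (G⁻¹.trace).re := by
    have : G⁻¹.trace = ∑ i, G⁻¹ i i := rfl
    rw [this, Complex.re_sum]
    refine Finset.sum_nonneg fun i _ => ?_
    have h := hGinvPD.posSemidef.re_dotProduct_nonneg ((Pi.single i 1 : Fin k → ℂ))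
    have e : star ((Pi.single i 1 : Fin k → ℂ)) ⬝ᵥ G⁻¹ *ᵥ ((Pi.single i 1 : Fin k → ℂ)) = G⁻¹ i i := by
      rw [Matrix.mulVec_single]
      have : star ((Pi.single i 1 : Fin k → ℂ)) = Pi.single i 1 := by
        simp [Pi.single_apply, funext_iff, apply_ite star]
      rw [this, single_dotProduct]
      simp
    rwa [e] at h
  -- Frobenius bound for X
  have hXsum : (∑ a, ∑ i, ‖X a i‖ ^ 2) ≤ (k : ℝ) := by
    have h := frob X
    rw [hXX] at h
    have := congrArg Complex.re h.symm
    simp only [Complex.ofReal_re, Complex.sub_re, Complex.natCast_re,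
      Complex.mul_re, Complex.ofReal_im, Complex.natCast_im] at this
    nlinarith [mul_nonneg hε.le hReGinv]
  -- Frobenius identity for Y
  have hYsum : (∑ a, ∑ i, ‖Y a i‖ ^ 2)
      = (∑ i, ∑ l, ‖(Aᴴ * B) i l‖ ^ 2) + ε * (∑ a, ∑ i, ‖B a i‖ ^ 2) := by
    have e1 : Yᴴ * Y = (Aᴴ * B)ᴴ * (Aᴴ * B) + (ε : ℂ) • (Bᴴ * B) := by
      rw [hY, Matrix.conjTranspose_mul, hSh.eq, Matrix.mul_assoc,
        ← Matrix.mul_assoc S S B, hSS, hGdef, Matrix.add_mul, Matrix.mul_add,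
        Matrix.smul_mul, Matrix.one_mul, Matrix.mul_smul,
        Matrix.conjTranspose_mul, Matrix.conjTranspose_conjTranspose]
      congr 1
      simp [Matrix.mul_assoc]
    have h2 := congrArg Matrix.trace e1
    rw [frob Y, Matrix.trace_add, Matrix.trace_smul, frob (Aᴴ * B), frob B,
      smul_eq_mul] at h2
    exact_mod_cast h2
  -- Cauchy–Schwarz
  have hcs : ‖(Aᴴ * B).trace‖ ^ 2 ≤
      (∑ a, ∑ i, ‖X a i‖ ^ 2) * (∑ a, ∑ i, ‖Y a i‖ ^ 2) := by
    rw [← hXY, trace_conj_sum]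
    have := cs_sum (fun c : Fin k × Fin d => X c.1 c.2) (fun c => Y c.1 c.2)
    simpa [Fintype.sum_prod_type] using this
  have hYnn : 0 ≤ (∑ a, ∑ i, ‖Y a i‖ ^ 2) := by positivity
  calc ‖(Aᴴ * B).trace‖ ^ 2 ≤ _ := hcs
    _ ≤ (k : ℝ) * (∑ a, ∑ i, ‖Y a i‖ ^ 2) := mul_le_mul_of_nonneg_right hXsum hYnn
    _ = (k : ℝ) * ((∑ i, ∑ l, ‖(Aᴴ * B) i l‖ ^ 2) + ε * (∑ a, ∑ i, ‖B a i‖ ^ 2)) := by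
        rw [hYsum]

lemma core {k d : ℕ} (A B : Matrix (Fin k) (Fin d) ℂ) :
    ‖(Aᴴ * B).trace‖ ^ 2 ≤ (k : ℝ) * ∑ i, ∑ l, ‖(Aᴴ * B) i l‖ ^ 2 := by
  by_contra hcon
  push_neg at hcon
  have hSBnn : (0:ℝ) ≤ ∑ a, ∑ i, ‖B a i‖ ^ 2 :=
    Finset.sum_nonneg fun _ _ => Finset.sum_nonneg fun _ _ => sq_nonneg _
  have htnn : (0:ℝ) ≤ (k:ℝ) * ∑ a, ∑ i, ‖B a i‖ ^ 2 :=
    mul_nonneg (Nat.cast_nonneg k) hSBnn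
  set SB := ∑ a, ∑ i, ‖B a i‖ ^ 2
  set SM := ∑ i, ∑ l, ‖(Aᴴ * B) i l‖ ^ 2
  set L := ‖(Aᴴ * B).trace‖ ^ 2 with hL
  set t := (k:ℝ) * SB with htdef
  have hδ : 0 < L - (k:ℝ) * SM := by linarith
  have hε : 0 < (L - (k:ℝ)*SM) / (t + 1) := div_pos hδ (by linarith)
  have h := core_eps A B hε
  have hexp : (k:ℝ) * (SM + ((L - (k:ℝ)*SM) / (t + 1)) * SB)
      = (k:ℝ)*SM + ((L - (k:ℝ)*SM)/(t+1)) * t := by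
    rw [htdef]; ring
  have hlt : ((L - (k:ℝ)*SM)/(t+1)) * t < L - (k:ℝ)*SM := by
    rw [div_mul_eq_mul_div, div_lt_iff₀ (by linarith)]
    nlinarith
  rw [hexp] at h
  linarith
open Complex Matrix Finset


lemma matExt_lamP_apply {d m : ℕ} (p : ℝ) (ρ : Matrix (Fin m × Fin d) (Fin m × Fin d) ℂ)
    (x y : Fin m × Fin d) :
    matExt m (lamP d p) ρ x y
      = (∑ l, ρ (x.1, l) (y.1, l)) * (if x.2 = y.2 then 1 else 0) - (p : ℂ) * ρ x y := by
  simp only [matExt, lamP, Matrix.sub_apply, Matrix.smul_apply, Matrix.one_apply,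
    Matrix.trace, Matrix.diag, Matrix.of_apply, smul_eq_mul]

lemma matExt_herm {d m : ℕ} (p : ℝ) (ρ : Matrix (Fin m × Fin d) (Fin m × Fin d) ℂ)
    (h : ρ.IsHermitian) : (matExt m (lamP d p) ρ).IsHermitian := by
  have happ : ∀ a b, conj (ρ a b) = ρ b a := fun a b => congrFun (congrFun h b) a
  refine Matrix.ext fun x y => ?_
  have h1 : star (∑ l, ρ (y.1, l) (x.1, l)) = ∑ l, ρ (x.1, l) (y.1, l) := by
    rw [star_sum]; exact Finset.sum_congr rfl fun l _ => happ _ _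
  have h2 : star (if y.2 = x.2 then (1:ℂ) else 0) = if x.2 = y.2 then 1 else 0 := by
    simp [apply_ite star, eq_comm]
  have h3 : star ((p:ℂ) * ρ y x) = (p:ℂ) * ρ x y := by
    rw [star_mul', RCLike.star_def, Complex.conj_ofReal, happ]
  rw [Matrix.conjTranspose_apply, matExt_lamP_apply, matExt_lamP_apply, star_sub,
    star_mul', h1, h2, h3]

lemma sum5 {α₁ α₂ α₃ α₄ α₅ : Type*} [Fintype α₁] [Fintype α₂] [Fintype α₃] [Fintype α₄]
    [Fintype α₅] (f : α₁ → α₂ → α₃ → α₄ → α₅ → ℂ) :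
    ∑ a : α₄, ∑ i : α₂, ∑ b : α₅, ∑ l : α₃, ∑ c : α₁, f c i l a b
      = ∑ c : α₁, ∑ i : α₂, ∑ l : α₃, ∑ a : α₄, ∑ b : α₅, f c i l a b := by
  calc ∑ a : α₄, ∑ i : α₂, ∑ b : α₅, ∑ l : α₃, ∑ c : α₁, f c i l a b
      = ∑ a : α₄, ∑ i : α₂, ∑ b : α₅, ∑ c : α₁, ∑ l : α₃, f c i l a b :=
        Finset.sum_congr rfl fun a _ => Finset.sum_congr rfl fun i _ =>
          Finset.sum_congr rfl fun b _ => Finset.sum_comm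
    _ = ∑ a : α₄, ∑ i : α₂, ∑ c : α₁, ∑ b : α₅, ∑ l : α₃, f c i l a b :=
        Finset.sum_congr rfl fun a _ => Finset.sum_congr rfl fun i _ => Finset.sum_comm
    _ = ∑ a : α₄, ∑ c : α₁, ∑ i : α₂, ∑ b : α₅, ∑ l : α₃, f c i l a b :=
        Finset.sum_congr rfl fun a _ => Finset.sum_comm
    _ = ∑ c : α₁, ∑ a : α₄, ∑ i : α₂, ∑ b : α₅, ∑ l : α₃, f c i l a b := Finset.sum_comm
    _ = ∑ c : α₁, ∑ i : α₂, ∑ a : α₄, ∑ b : α₅, ∑ l : α₃, f c i l a b :=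
        Finset.sum_congr rfl fun c _ => Finset.sum_comm
    _ = ∑ c : α₁, ∑ i : α₂, ∑ a : α₄, ∑ l : α₃, ∑ b : α₅, f c i l a b :=
        Finset.sum_congr rfl fun c _ => Finset.sum_congr rfl fun i _ =>
          Finset.sum_congr rfl fun a _ => Finset.sum_comm
    _ = ∑ c : α₁, ∑ i : α₂, ∑ l : α₃, ∑ a : α₄, ∑ b : α₅, f c i l a b :=
        Finset.sum_congr rfl fun c _ => Finset.sum_congr rfl fun i _ => Finset.sum_comm

lemma quad_eq {d m : ℕ} (p : ℝ) (B : Matrix (Fin m × Fin d) (Fin m × Fin d) ℂ)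
    (v : Fin m × Fin d → ℂ) :
    star v ⬝ᵥ (matExt m (lamP d p) (Bᴴ * B)) *ᵥ v
      = ∑ c : Fin m × Fin d,
          ((∑ i, ∑ l, conj (∑ a, v (a, i) * B c (a, l)) * (∑ a, v (a, i) * B c (a, l)))
            - (p : ℂ) * (conj (∑ i, ∑ a, v (a, i) * B c (a, i))
                * (∑ i, ∑ a, v (a, i) * B c (a, i)))) := by
  classical
  have hρ : ∀ x y, (Bᴴ * B) x y = ∑ c, conj (B c x) * B c y := by
    intro x y
    simp [Matrix.mul_apply, Matrix.conjTranspose_apply]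
  have hdot : star v ⬝ᵥ (matExt m (lamP d p) (Bᴴ * B)) *ᵥ v
      = ∑ x, ∑ y, conj (v x) * (matExt m (lamP d p) (Bᴴ * B) x y * v y) := by
    simp [dotProduct, Matrix.mulVec, Finset.mul_sum]
  rw [hdot]
  simp only [matExt_lamP_apply, sub_mul, mul_sub, Finset.sum_sub_distrib]
  congr 1
  -- first term
  · have step1 : ∀ x : Fin m × Fin d,
        (∑ y : Fin m × Fin d, conj (v x) * ((∑ l, (Bᴴ * B) (x.1, l) (y.1, l))
            * (if x.2 = y.2 then (1:ℂ) else 0) * v y))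
        = ∑ b : Fin m, conj (v x) * ((∑ l, (Bᴴ * B) (x.1, l) (b, l)) * v (b, x.2)) := by
      intro x
      rw [Fintype.sum_prod_type]
      refine Finset.sum_congr rfl fun b _ => ?_
      rw [Finset.sum_eq_single x.2]
      · simp
      · intro j _ hj
        simp [Ne.symm hj]
      · simp
    calc ∑ x : Fin m × Fin d, ∑ y : Fin m × Fin d,
            conj (v x) * ((∑ l, (Bᴴ * B) (x.1, l) (y.1, l))
              * (if x.2 = y.2 then (1:ℂ) else 0) * v y)
        = ∑ x : Fin m × Fin d, ∑ b : Fin m,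
            conj (v x) * ((∑ l, (Bᴴ * B) (x.1, l) (b, l)) * v (b, x.2)) :=
          Finset.sum_congr rfl fun x _ => step1 x
      _ = ∑ a : Fin m, ∑ i : Fin d, ∑ b : Fin m, ∑ l : Fin d, ∑ c : Fin m × Fin d,
            (conj (v (a, i)) * conj (B c ((a, i).1, l))) * (v (b, i) * B c (b, l)) := by
          rw [Fintype.sum_prod_type]
          refine Finset.sum_congr rfl fun a _ => Finset.sum_congr rfl fun i _ =>
            Finset.sum_congr rfl fun b _ => ?_
          simp only [hρ]
          rw [Finset.sum_mul, Finset.mul_sum]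
          refine Finset.sum_congr rfl fun l _ => ?_
          rw [Finset.sum_mul, Finset.mul_sum]
          refine Finset.sum_congr rfl fun c _ => ?_
          ring
      _ = ∑ c : Fin m × Fin d, ∑ i : Fin d, ∑ l : Fin d, ∑ a : Fin m, ∑ b : Fin m,
            (conj (v (a, i)) * conj (B c (a, l))) * (v (b, i) * B c (b, l)) :=
          sum5 _
      _ = ∑ c : Fin m × Fin d,
            ∑ i, ∑ l, conj (∑ a, v (a, i) * B c (a, l)) * (∑ a, v (a, i) * B c (a, l)) := by
          refine Finset.sum_congr rfl fun c _ => Finset.sum_congr rfl fun i _ =>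
            Finset.sum_congr rfl fun l _ => ?_
          rw [map_sum, Finset.sum_mul_sum]
          refine Finset.sum_congr rfl fun a _ => Finset.sum_congr rfl fun b _ => ?_
          rw [_root_.map_mul]
  -- second term
  · have key : ∀ c : Fin m × Fin d,
        conj (∑ i, ∑ a, v (a, i) * B c (a, i)) = ∑ x : Fin m × Fin d, conj (v x) * conj (B c x) := by
      intro c
      have e : (∑ x : Fin m × Fin d, conj (v x) * conj (B c x))
          = ∑ a : Fin m, ∑ i : Fin d, conj (v (a, i)) * conj (B c (a, i)) :=
        Fintype.sum_prod_type _
      rw [e, map_sum, Finset.sum_comm]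
      refine Finset.sum_congr rfl fun a _ => ?_
      rw [map_sum]
      exact Finset.sum_congr rfl fun i _ => by rw [_root_.map_mul]
    have key2 : ∀ c : Fin m × Fin d,
        (∑ i, ∑ a, v (a, i) * B c (a, i)) = ∑ y : Fin m × Fin d, B c y * v y := by
      intro c
      have e : (∑ y : Fin m × Fin d, B c y * v y)
          = ∑ a : Fin m, ∑ i : Fin d, B c (a, i) * v (a, i) :=
        Fintype.sum_prod_type _
      rw [e, Finset.sum_comm]
      exact Finset.sum_congr rfl fun i _ => Finset.sum_congr rfl fun a _ => mul_comm _ _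
    calc ∑ x : Fin m × Fin d, ∑ y : Fin m × Fin d, conj (v x) * ((p : ℂ) * (Bᴴ * B) x y * v y)
        = ∑ x : Fin m × Fin d, ∑ y : Fin m × Fin d, ∑ c : Fin m × Fin d,
            (p : ℂ) * ((conj (v x) * conj (B c x)) * (B c y * v y)) := by
          refine Finset.sum_congr rfl fun x _ => Finset.sum_congr rfl fun y _ => ?_
          simp only [hρ, Finset.mul_sum, Finset.sum_mul]
          exact Finset.sum_congr rfl fun c _ => by ring
      _ = ∑ x : Fin m × Fin d, ∑ c : Fin m × Fin d, ∑ y : Fin m × Fin d,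
            (p : ℂ) * ((conj (v x) * conj (B c x)) * (B c y * v y)) :=
          Finset.sum_congr rfl fun x _ => Finset.sum_comm
      _ = ∑ c : Fin m × Fin d, ∑ x : Fin m × Fin d, ∑ y : Fin m × Fin d,
            (p : ℂ) * ((conj (v x) * conj (B c x)) * (B c y * v y)) := Finset.sum_comm
      _ = ∑ c : Fin m × Fin d, (p : ℂ) *
            ((∑ x : Fin m × Fin d, conj (v x) * conj (B c x)) * (∑ y : Fin m × Fin d, B c y * v y)) := by
          refine Finset.sum_congr rfl fun c _ => ?_
          rw [Finset.sum_mul_sum]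
          simp only [Finset.mul_sum]
      _ = ∑ c : Fin m × Fin d, (p : ℂ) * (conj (∑ i, ∑ a, v (a, i) * B c (a, i))
            * (∑ i, ∑ a, v (a, i) * B c (a, i))) := by
          refine Finset.sum_congr rfl fun c _ => ?_
          rw [key, key2]


lemma partA {d k : ℕ} (p : ℝ) (hp0 : 0 ≤ p) (hpk : p * k ≤ 1) :
    kPositive d k (lamP d p) := by
  intro ρ hρ
  open scoped MatrixOrder in
  obtain ⟨B, hB⟩ := CStarAlgebra.nonneg_iff_eq_star_mul_self.mp hρ.nonneg
  rw [hB, Matrix.star_eq_conjTranspose]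
  refine Matrix.PosSemidef.of_dotProduct_mulVec_nonneg
    (matExt_herm p _ (Matrix.posSemidef_conjTranspose_mul_self B).isHermitian) fun v => ?_
  rw [quad_eq p B v]
  -- realify each term
  have hterm : ∀ c : Fin k × Fin d,
      ((∑ i, ∑ l, conj (∑ a, v (a, i) * B c (a, l)) * (∑ a, v (a, i) * B c (a, l)))
        - (p : ℂ) * (conj (∑ i, ∑ a, v (a, i) * B c (a, i))
            * (∑ i, ∑ a, v (a, i) * B c (a, i))))
      = (((∑ i, ∑ l, ‖∑ a, v (a, i) * B c (a, l)‖ ^ 2)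
          - p * ‖∑ i, ∑ a, v (a, i) * B c (a, i)‖ ^ 2 : ℝ) : ℂ) := by
    intro c
    simp only [conj_mul_self']
    push_cast
    ring
  simp only [hterm]
  rw [← Complex.ofReal_sum]
  rw [Complex.zero_le_real]
  refine Finset.sum_nonneg fun c _ => ?_
  -- use core with suitable matrices
  set A' : Matrix (Fin k) (Fin d) ℂ := Matrix.of fun a i => conj (v (a, i)) with hA'
  set B' : Matrix (Fin k) (Fin d) ℂ := Matrix.of fun a l => B c (a, l) with hB'
  have hentry : ∀ i l, (A'ᴴ * B') i l = ∑ a, v (a, i) * B c (a, l) := by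
    intro i l
    simp [hA', hB', Matrix.mul_apply, Matrix.conjTranspose_apply]
  have htrace : (A'ᴴ * B').trace = ∑ i, ∑ a, v (a, i) * B c (a, i) := by
    rw [Matrix.trace]
    exact Finset.sum_congr rfl fun i _ => (hentry i i).trans (by rfl)
  have h := core A' B'
  rw [htrace] at h
  simp only [hentry] at h
  have hsumnn : (0:ℝ) ≤ ∑ i, ∑ l, ‖∑ a, v (a, i) * B c (a, l)‖ ^ 2 :=
    Finset.sum_nonneg fun _ _ => Finset.sum_nonneg fun _ _ => sq_nonneg _
  have hnn : (0:ℝ) ≤ ‖∑ i, ∑ a, v (a, i) * B c (a, i)‖ ^ 2 := sq_nonneg _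
  nlinarith [mul_le_mul_of_nonneg_left h hp0]

lemma partB {d k : ℕ} (hkd : k < d) (p : ℝ) (hp : 1 / ((k:ℝ) + 1) < p) :
    ¬ kPositive d (k + 1) (lamP d p) := by
  intro hpos
  have hd : k + 1 ≤ d := hkd
  set e : Fin (k+1) → Fin d := fun a => ⟨a.1, lt_of_lt_of_le a.2 hd⟩ with he
  have einj : ∀ a b : Fin (k+1), e a = e b ↔ a = b := by
    intro a b
    constructor
    · intro h
      have h2 := congrArg Fin.val h
      simp only [he] at h2
      exact Fin.ext h2
    · intro h; rw [h]
  set ψ : Fin (k+1) × Fin d → ℂ := fun x => if x.2 = e x.1 then 1 else 0 with hψ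
  set ρ : Matrix (Fin (k+1) × Fin d) (Fin (k+1) × Fin d) ℂ :=
    Matrix.of fun x y => ψ x * conj (ψ y) with hρdef
  have hρ : ∀ x y, ρ x y = ψ x * conj (ψ y) := fun x y => rfl
  have hPSD : ρ.PosSemidef := by
    refine Matrix.PosSemidef.of_dotProduct_mulVec_nonneg ?_ ?_
    · refine Matrix.ext fun x y => ?_
      rw [Matrix.conjTranspose_apply, hρ, hρ, star_mul']
      simp [mul_comm]
    · intro u
      have hsum : star u ⬝ᵥ ρ *ᵥ u
          = conj (∑ y, conj (ψ y) * u y) * (∑ y, conj (ψ y) * u y) := by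
        have h1 : star u ⬝ᵥ ρ *ᵥ u = ∑ x, ∑ y, conj (u x) * (ρ x y * u y) := by
          simp [dotProduct, Matrix.mulVec, Finset.mul_sum]
        rw [h1, map_sum, Finset.sum_mul]
        refine Finset.sum_congr rfl fun x _ => ?_
        rw [Finset.mul_sum]
        refine Finset.sum_congr rfl fun y _ => ?_
        rw [hρ, _root_.map_mul, Complex.conj_conj]
        ring
      rw [hsum, conj_mul_self', Complex.zero_le_real]
      exact sq_nonneg _
  have h := (hpos ρ hPSD).dotProduct_mulVec_nonneg ψ
  have hblock : ∀ a b : Fin (k+1), (∑ l, ρ (a, l) (b, l)) = if a = b then 1 else 0 := by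
    intro a b
    have : ∀ l, ρ (a, l) (b, l) = if l = e a then (if l = e b then (1:ℂ) else 0) else 0 := by
      intro l
      rw [hρ, hψ]
      simp only [apply_ite conj, _root_.map_one, _root_.map_zero]
      split <;> split <;> simp
    simp only [this]
    rw [Finset.sum_ite_eq' Finset.univ (e a)]
    simp [einj a b]
  have hQ : star ψ ⬝ᵥ (matExt (k+1) (lamP d p) ρ) *ᵥ ψ
      = (((k:ℝ) + 1) : ℂ) - (p : ℂ) * (((k:ℝ) + 1) : ℂ)^2 := by
    have h1 : star ψ ⬝ᵥ (matExt (k+1) (lamP d p) ρ) *ᵥ ψ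
        = ∑ x : Fin (k+1) × Fin d, ∑ y : Fin (k+1) × Fin d,
            conj (ψ x) * ((matExt (k+1) (lamP d p) ρ) x y * ψ y) := by
      simp [dotProduct, Matrix.mulVec, Finset.mul_sum]
    rw [h1]
    have h2 : ∀ x y : Fin (k+1) × Fin d,
        conj (ψ x) * ((matExt (k+1) (lamP d p) ρ) x y * ψ y)
        = conj (ψ x) * (((if x.1 = y.1 then (1:ℂ) else 0) * (if x.2 = y.2 then (1:ℂ) else 0)
            - (p:ℂ) * (ψ x * conj (ψ y))) * ψ y) := by
      intro x y
      rw [matExt_lamP_apply, hblock x.1 y.1, hρ]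
    simp only [h2]
    rw [Fintype.sum_prod_type]
    have h3 : ∀ (a : Fin (k+1)) (i : Fin d),
        (∑ y : Fin (k+1) × Fin d, conj (ψ (a, i)) *
          (((if a = y.1 then (1:ℂ) else 0) * (if i = y.2 then (1:ℂ) else 0)
            - (p:ℂ) * (ψ (a, i) * conj (ψ y))) * ψ y))
        = ∑ b : Fin (k+1), conj (ψ (a, i)) *
            (((if a = b then (1:ℂ) else 0) * (if i = e b then (1:ℂ) else 0)
              - (p:ℂ) * (ψ (a, i) * 1)) * 1) := by
      intro a i
      rw [Fintype.sum_prod_type]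
      refine Finset.sum_congr rfl fun b _ => ?_
      have : ∀ j : Fin d, conj (ψ (a, i)) *
          (((if a = b then (1:ℂ) else 0) * (if i = j then (1:ℂ) else 0)
            - (p:ℂ) * (ψ (a, i) * conj (ψ (b, j)))) * ψ (b, j))
          = if j = e b then conj (ψ (a, i)) *
              (((if a = b then (1:ℂ) else 0) * (if i = j then (1:ℂ) else 0)
                - (p:ℂ) * (ψ (a, i) * 1)) * 1) else 0 := by
        intro j
        by_cases hj : j = e b <;> simp [hψ, hj]
      simp only [this]
      rw [Finset.sum_ite_eq' Finset.univ (e b)]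
      simp
    simp only [h3]
    have h4 : ∀ a : Fin (k+1),
        (∑ i : Fin d, ∑ b : Fin (k+1), conj (ψ (a, i)) *
            (((if a = b then (1:ℂ) else 0) * (if i = e b then (1:ℂ) else 0)
              - (p:ℂ) * (ψ (a, i) * 1)) * 1))
        = ∑ b : Fin (k+1), ((if a = b then (1:ℂ) else 0) * (if e a = e b then (1:ℂ) else 0)
              - (p:ℂ)) := by
      intro a
      rw [Finset.sum_comm]
      refine Finset.sum_congr rfl fun b _ => ?_
      have : ∀ i : Fin d, conj (ψ (a, i)) *
            (((if a = b then (1:ℂ) else 0) * (if i = e b then (1:ℂ) else 0)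
              - (p:ℂ) * (ψ (a, i) * 1)) * 1)
          = if i = e a then (((if a = b then (1:ℂ) else 0) * (if i = e b then (1:ℂ) else 0)
              - (p:ℂ))) else 0 := by
        intro i
        by_cases hi : i = e a <;> simp [hψ, hi]
      simp only [this]
      rw [Finset.sum_ite_eq' Finset.univ (e a)]
      simp
    simp only [h4]
    have h5 : ∀ a b : Fin (k+1),
        ((if a = b then (1:ℂ) else 0) * (if e a = e b then (1:ℂ) else 0) - (p:ℂ))
        = (if a = b then (1:ℂ) else 0) - (p:ℂ) := by
      intro a b
      simp only [einj]
      split <;> simp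
    simp only [h5]
    simp only [Finset.sum_sub_distrib]
    simp [Finset.sum_ite_eq, Finset.card_univ]
    push_cast
    ring
  rw [hQ] at h
  have hreal : ((((k:ℝ) + 1) : ℂ) - (p : ℂ) * (((k:ℝ) + 1) : ℂ)^2)
      = ((((k:ℝ) + 1) - p * ((k:ℝ) + 1)^2 : ℝ) : ℂ) := by
    push_cast
    ring
  rw [hreal, Complex.zero_le_real] at h
  have hk1 : (0:ℝ) < (k:ℝ) + 1 := by positivity
  rw [div_lt_iff₀ hk1] at hp
  nlinarith


/-- Tomiyama: `Λ_p` is `k`-positive for `1/(k+1) ≤ p ≤ 1/k` (with `k < d`),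
and not `(k+1)`-positive when `p > 1/(k+1)`. -/
theorem lamP_kpositivity (d k : ℕ) (hk : 0 < k) (hkd : k < d) (p : ℝ) :
    ((1 / ((k : ℝ) + 1) ≤ p ∧ p ≤ 1 / (k : ℝ)) → kPositive d k (lamP d p)) ∧
    (1 / ((k : ℝ) + 1) < p → ¬ kPositive d (k + 1) (lamP d p)) := by
  constructor
  · rintro ⟨hp1, hp2⟩
    have hkpos : (0:ℝ) < k := by exact_mod_cast hk
    have hp0 : 0 ≤ p := le_trans (by positivity) hp1
    have hpk : p * k ≤ 1 := by
      have : p * k ≤ (1 / k) * k := by nlinarith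
      calc p * k ≤ (1 / k) * k := this
        _ = 1 := by field_simp
    exact partA p hp0 hpk
  · intro hp
    exact partB hkd p hp
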